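/- For any four jointly distributed random variables X, Y, Z, W on a finite probability space, H(Z|W) ≤ H(Z|X,W) + H(Z|Y,W) + I(X:Y|W). -/

import Mathlib

open scoped BigOperators

namespace PaperIngleton

open Classical in
/-- Probability of an event under a pmf `p` on a finite sample space. -/
noncomputable def prob {Ω : Type*} [Fintype Ω] (p : Ω → ℝ) (E : Ω → Prop) : ℝ :=
  ∑ ω, if E ω then p ω else 0

/-- Shannon entropy of a finitely-valued random variable `X` under pmf `p`. -/
noncomputable def ent {Ω S : Type*} [Fintype Ω] [Fintype S] (p : Ω → ℝ) (X : Ω → S) : ℝ :=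
  -∑ s : S, prob p (fun ω => X ω = s) * Real.log (prob p (fun ω => X ω = s))

/-- Conditional entropy `H(X|Y)`. -/
noncomputable def condEnt {Ω S T : Type*} [Fintype Ω] [Fintype S] [Fintype T]
    (p : Ω → ℝ) (X : Ω → S) (Y : Ω → T) : ℝ :=
  ent p (fun ω => (X ω, Y ω)) - ent p Y

/-- Mutual information `I(X:Y)`. -/
noncomputable def mi {Ω S T : Type*} [Fintype Ω] [Fintype S] [Fintype T]
    (p : Ω → ℝ) (X : Ω → S) (Y : Ω → T) : ℝ :=
  ent p X + ent p Y - ent p (fun ω => (X ω, Y ω))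

/-- Conditional mutual information `I(X:Y|Z)`. -/
noncomputable def cmi {Ω S T U : Type*} [Fintype Ω] [Fintype S] [Fintype T] [Fintype U]
    (p : Ω → ℝ) (X : Ω → S) (Y : Ω → T) (Z : Ω → U) : ℝ :=
  ent p (fun ω => (X ω, Z ω)) + ent p (fun ω => (Y ω, Z ω))
    - ent p (fun ω => (X ω, Y ω, Z ω)) - ent p Z

end PaperIngleton

namespace PaperIngleton

section Aux

variable {Ω : Type} [Fintype Ω]

lemma prob_nonneg {p : Ω → ℝ} (hp : ∀ ω, 0 ≤ p ω) (E : Ω → Prop) : 0 ≤ prob p E := by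
  classical
  apply Finset.sum_nonneg
  intro ω _
  split <;> simp [hp ω]

lemma prob_congr (p : Ω → ℝ) {E F : Ω → Prop} (h : ∀ ω, E ω ↔ F ω) :
    prob p E = prob p F := by
  classical
  unfold prob
  exact Finset.sum_congr rfl fun ω _ => by simp only [h ω]

lemma le_prob {p : Ω → ℝ} (hp : ∀ ω, 0 ≤ p ω) {E : Ω → Prop} {ω₀ : Ω} (h : E ω₀) :
    p ω₀ ≤ prob p E := by
  classical
  unfold prob
  have := Finset.single_le_sum (f := fun ω => if E ω then p ω else 0)
    (fun ω _ => by split <;> simp [hp ω]) (Finset.mem_univ ω₀)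
  simpa [h] using this

lemma prob_mono {p : Ω → ℝ} (hp : ∀ ω, 0 ≤ p ω) {E F : Ω → Prop} (h : ∀ ω, E ω → F ω) :
    prob p E ≤ prob p F := by
  classical
  unfold prob
  apply Finset.sum_le_sum
  intro ω _
  by_cases hE : E ω
  · simp [hE, h ω hE]
  · simp only [hE, if_false]
    split <;> simp [hp ω]

lemma sum_comp {α : Type} [Fintype α] (p : Ω → ℝ) (G : Ω → α) (F : α → ℝ) :
    ∑ ω, p ω * F (G ω) = ∑ v, prob p (fun ω => G ω = v) * F v := by
  classical
  unfold prob
  simp only [Finset.sum_mul, ite_mul, zero_mul]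
  rw [Finset.sum_comm]
  exact Finset.sum_congr rfl fun ω _ => by rw [Finset.sum_ite_eq]; simp

lemma ent_eq {S : Type} [Fintype S] (p : Ω → ℝ) (X : Ω → S) :
    ent p X = -∑ ω, p ω * Real.log (prob p (fun ω' => X ω' = X ω)) := by
  rw [ent]
  congr 1
  exact (sum_comp p X (fun s => Real.log (prob p (fun ω' => X ω' = s)))).symm

lemma sum_prob_eq {S : Type} [Fintype S] (p : Ω → ℝ) (X : Ω → S) (E : Ω → Prop) :
    ∑ s, prob p (fun ω => X ω = s ∧ E ω) = prob p E := by
  classical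
  unfold prob
  rw [Finset.sum_comm]
  refine Finset.sum_congr rfl fun ω _ => ?_
  by_cases hE : E ω
  · simp only [hE, and_true]
    rw [Finset.sum_ite_eq]
    simp
  · simp [hE]

lemma sum_prob_univ {S : Type} [Fintype S] (p : Ω → ℝ) (X : Ω → S) :
    ∑ s, prob p (fun ω => X ω = s) = ∑ ω, p ω := by
  classical
  unfold prob
  rw [Finset.sum_comm]
  refine Finset.sum_congr rfl fun ω _ => ?_
  rw [Finset.sum_ite_eq]
  simp

end Aux

lemma key {Ω S T U V : Type} [Fintype Ω] [Fintype S] [Fintype T] [Fintype U] [Fintype V]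
    (p : Ω → ℝ) (hp : ∀ ω, 0 ≤ p ω) (hp1 : ∑ ω, p ω = 1)
    (X : Ω → S) (Y : Ω → T) (Z : Ω → U) (W : Ω → V) :
    ent p (fun ω => (Z ω, W ω)) + ent p (fun ω => (X ω, Y ω, W ω)) ≤
      ent p (fun ω => (Z ω, (X ω, W ω))) + ent p (fun ω => (Z ω, (Y ω, W ω))) := by
  classical
  -- value-based probabilities
  set A : S → U → V → ℝ := fun x z w => prob p (fun ω => X ω = x ∧ Z ω = z ∧ W ω = w) with hA
  set B : T → U → V → ℝ := fun y z w => prob p (fun ω => Y ω = y ∧ Z ω = z ∧ W ω = w) with hB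
  set C : U → V → ℝ := fun z w => prob p (fun ω => Z ω = z ∧ W ω = w) with hC
  set D : S → T → V → ℝ := fun x y w => prob p (fun ω => X ω = x ∧ Y ω = y ∧ W ω = w) with hD
  set Ee : U → V → S → T → ℝ :=
    fun z w x y => prob p (fun ω => Z ω = z ∧ W ω = w ∧ X ω = x ∧ Y ω = y) with hEe
  set qa : Ω → ℝ := fun ω => A (X ω) (Z ω) (W ω) with hqa
  set qb : Ω → ℝ := fun ω => B (Y ω) (Z ω) (W ω) with hqb
  set qc : Ω → ℝ := fun ω => C (Z ω) (W ω) with hqc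
  set qd : Ω → ℝ := fun ω => D (X ω) (Y ω) (W ω) with hqd
  set qe : Ω → ℝ := fun ω => Ee (Z ω) (W ω) (X ω) (Y ω) with hqe
  -- rewrite entropies
  have h1 : ent p (fun ω => (Z ω, W ω)) = -∑ ω, p ω * Real.log (qc ω) := by
    rw [ent_eq]
    congr 1
    refine Finset.sum_congr rfl fun ω _ => ?_
    rw [prob_congr p (F := fun ω' => Z ω' = Z ω ∧ W ω' = W ω) (fun ω' => by
      simp [Prod.ext_iff])]
  have h2 : ent p (fun ω => (X ω, Y ω, W ω)) = -∑ ω, p ω * Real.log (qd ω) := by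
    rw [ent_eq]
    congr 1
    refine Finset.sum_congr rfl fun ω _ => ?_
    rw [prob_congr p (F := fun ω' => X ω' = X ω ∧ Y ω' = Y ω ∧ W ω' = W ω) (fun ω' => by
      simp [Prod.ext_iff])]
  have h3 : ent p (fun ω => (Z ω, (X ω, W ω))) = -∑ ω, p ω * Real.log (qa ω) := by
    rw [ent_eq]
    congr 1
    refine Finset.sum_congr rfl fun ω _ => ?_
    rw [prob_congr p (F := fun ω' => X ω' = X ω ∧ Z ω' = Z ω ∧ W ω' = W ω) (fun ω' => by
      simp [Prod.ext_iff]; tauto)]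
  have h4 : ent p (fun ω => (Z ω, (Y ω, W ω))) = -∑ ω, p ω * Real.log (qb ω) := by
    rw [ent_eq]
    congr 1
    refine Finset.sum_congr rfl fun ω _ => ?_
    rw [prob_congr p (F := fun ω' => Y ω' = Y ω ∧ Z ω' = Z ω ∧ W ω' = W ω) (fun ω' => by
      simp [Prod.ext_iff]; tauto)]
  rw [h1, h2, h3, h4]
  -- reduce to sum inequality
  rw [← neg_add, ← neg_add, neg_le_neg_iff, ← Finset.sum_add_distrib, ← Finset.sum_add_distrib]
  -- ∑ p (log qa + log qb) ≤ ∑ p (log qc + log qd)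
  have hT : ∑ ω, p ω * (qa ω * qb ω / (qc ω * qe ω)) ≤ 1 := by
    have hrw : ∀ ω, p ω * (qa ω * qb ω / (qc ω * qe ω)) =
        p ω * ((fun v : U × V × S × T =>
          A v.2.2.1 v.1 v.2.1 * B v.2.2.2 v.1 v.2.1 / (C v.1 v.2.1 * Ee v.1 v.2.1 v.2.2.1 v.2.2.2))
          ((fun ω => (Z ω, W ω, X ω, Y ω)) ω)) := fun ω => rfl
    calc ∑ ω, p ω * (qa ω * qb ω / (qc ω * qe ω))
        = ∑ v : U × V × S × T, prob p (fun ω => (Z ω, W ω, X ω, Y ω) = v) *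
            (A v.2.2.1 v.1 v.2.1 * B v.2.2.2 v.1 v.2.1 /
              (C v.1 v.2.1 * Ee v.1 v.2.1 v.2.2.1 v.2.2.2)) := by
          simp only [hrw]
          exact sum_comp p (fun ω => (Z ω, W ω, X ω, Y ω)) (fun v =>
            A v.2.2.1 v.1 v.2.1 * B v.2.2.2 v.1 v.2.1 /
              (C v.1 v.2.1 * Ee v.1 v.2.1 v.2.2.1 v.2.2.2))
      _ = ∑ v : U × V × S × T, Ee v.1 v.2.1 v.2.2.1 v.2.2.2 *
            (A v.2.2.1 v.1 v.2.1 * B v.2.2.2 v.1 v.2.1 /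
              (C v.1 v.2.1 * Ee v.1 v.2.1 v.2.2.1 v.2.2.2)) := by
          refine Finset.sum_congr rfl fun v _ => ?_
          congr 1
          exact prob_congr p (fun ω => by simp [Prod.ext_iff])
      _ ≤ ∑ v : U × V × S × T, A v.2.2.1 v.1 v.2.1 * B v.2.2.2 v.1 v.2.1 / C v.1 v.2.1 := by
          refine Finset.sum_le_sum fun v _ => ?_
          rcases eq_or_ne (Ee v.1 v.2.1 v.2.2.1 v.2.2.2) 0 with h0 | h0
          · rw [h0, zero_mul]
            exact div_nonneg (mul_nonneg (prob_nonneg hp _) (prob_nonneg hp _))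
              (prob_nonneg hp _)
          · refine le_of_eq ?_
            rcases eq_or_ne (C v.1 v.2.1) 0 with hC0 | hC0
            · simp [hC0]
            · field_simp
      _ = ∑ z, ∑ w, ∑ x, ∑ y, A x z w * B y z w / C z w := by
          rw [Fintype.sum_prod_type]
          refine Finset.sum_congr rfl fun z _ => ?_
          rw [Fintype.sum_prod_type]
          refine Finset.sum_congr rfl fun w _ => ?_
          rw [Fintype.sum_prod_type]
      _ ≤ ∑ z, ∑ w, C z w := by
          refine Finset.sum_le_sum fun z _ => Finset.sum_le_sum fun w _ => ?_
          have hy : ∀ x, ∑ y, A x z w * B y z w / C z w = A x z w * C z w / C z w := by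
            intro x
            rw [← Finset.sum_div, ← Finset.mul_sum]
            congr 2
            exact sum_prob_eq p Y (fun ω => Z ω = z ∧ W ω = w)
          calc ∑ x, ∑ y, A x z w * B y z w / C z w
              = ∑ x, A x z w * C z w / C z w := by
                exact Finset.sum_congr rfl fun x _ => hy x
            _ ≤ ∑ x, A x z w := by
                refine Finset.sum_le_sum fun x _ => ?_
                rcases eq_or_ne (C z w) 0 with h0 | h0
                · simp [h0]
                  exact prob_nonneg hp _
                · rw [mul_div_cancel_right₀ _ h0]
            _ = C z w := sum_prob_eq p X (fun ω => Z ω = z ∧ W ω = w)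
      _ = 1 := by
          rw [Finset.sum_comm]
          have hw : ∀ w, ∑ z, C z w = prob p (fun ω => W ω = w) :=
            fun w => sum_prob_eq p Z (fun ω => W ω = w)
          rw [Finset.sum_congr rfl (fun w _ => hw w), sum_prob_univ, hp1]
  have step : ∀ ω ∈ Finset.univ (α := Ω),
      p ω * Real.log (qa ω) + p ω * Real.log (qb ω) ≤
        (p ω * Real.log (qc ω) + p ω * Real.log (qd ω)) +
          (p ω * (qa ω * qb ω / (qc ω * qe ω)) - p ω) := by
    intro ω _
    rcases eq_or_lt_of_le (hp ω) with h0 | h0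
    · simp [← h0]
    · have pa : 0 < qa ω := lt_of_lt_of_le h0 (le_prob hp ⟨rfl, rfl, rfl⟩)
      have pb : 0 < qb ω := lt_of_lt_of_le h0 (le_prob hp ⟨rfl, rfl, rfl⟩)
      have pc : 0 < qc ω := lt_of_lt_of_le h0 (le_prob hp ⟨rfl, rfl⟩)
      have pe : 0 < qe ω := lt_of_lt_of_le h0 (le_prob hp ⟨rfl, rfl, rfl, rfl⟩)
      have hde : qe ω ≤ qd ω :=
        prob_mono hp (fun ω' h' => ⟨h'.2.2.1, h'.2.2.2, h'.2.1⟩)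
      have hlog : Real.log (qa ω * qb ω / (qc ω * qe ω)) ≤
          qa ω * qb ω / (qc ω * qe ω) - 1 :=
        Real.log_le_sub_one_of_pos (by positivity)
      rw [Real.log_div (by positivity) (by positivity),
        Real.log_mul pa.ne' pb.ne', Real.log_mul pc.ne' pe.ne'] at hlog
      have hld : Real.log (qe ω) ≤ Real.log (qd ω) := Real.log_le_log pe hde
      have hcomb : Real.log (qa ω) + Real.log (qb ω) ≤
          Real.log (qc ω) + Real.log (qd ω) + (qa ω * qb ω / (qc ω * qe ω) - 1) := by
        linarith
      nlinarith [mul_le_mul_of_nonneg_left hcomb (hp ω)]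
  calc ∑ ω, (p ω * Real.log (qa ω) + p ω * Real.log (qb ω))
      ≤ ∑ ω, ((p ω * Real.log (qc ω) + p ω * Real.log (qd ω)) +
          (p ω * (qa ω * qb ω / (qc ω * qe ω)) - p ω)) := Finset.sum_le_sum step
    _ = ∑ ω, (p ω * Real.log (qc ω) + p ω * Real.log (qd ω)) +
          ((∑ ω, p ω * (qa ω * qb ω / (qc ω * qe ω))) - ∑ ω, p ω) := by
        rw [Finset.sum_add_distrib, Finset.sum_sub_distrib]
    _ ≤ ∑ ω, (p ω * Real.log (qc ω) + p ω * Real.log (qd ω)) := by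
        rw [hp1]
        linarith [hT]

theorem stmt1 {Ω S T U V : Type} [Fintype Ω] [Fintype S] [Fintype T] [Fintype U] [Fintype V]
    (p : Ω → ℝ) (hp : ∀ ω, 0 ≤ p ω) (hp1 : ∑ ω, p ω = 1)
    (X : Ω → S) (Y : Ω → T) (Z : Ω → U) (W : Ω → V) :
    condEnt p Z W ≤ condEnt p Z (fun ω => (X ω, W ω))
      + condEnt p Z (fun ω => (Y ω, W ω)) + cmi p X Y W := by
  have hkey := key p hp hp1 X Y Z W
  simp only [condEnt, cmi] at *
  linarith

end PaperIngleton
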